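/- For any λ ∈ (0,1), ξ ∈ ℝ and n ∈ ℕ, the product over all k ≥ 0 with k ≠ n of |cos(λᵏ ξ)| is at most |μ̂_{λ³}(ξ)|² + |μ̂_{λ³}(λξ)|² + |μ̂_{λ³}(λ²ξ)|². -/

import Mathlib

open MeasureTheory Filter Set

noncomputable section

/-- The sign associated to a boolean: `true ↦ 1`, `false ↦ -1`. -/
def sgn (b : Bool) : ℝ := if b then 1 else -1

/-- `ν` is the (1/2,1/2) i.i.d. Bernoulli measure on `{-1,1}^ℕ` (coded by booleans). -/
def IsBernoulliMeasure (ν : Measure (ℕ → Bool)) : Prop :=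
  IsProbabilityMeasure ν ∧
    ∀ (s : Finset ℕ) (b : ℕ → Bool), ν {a | ∀ i ∈ s, a i = b i} = (1 / 2 : ENNReal) ^ s.card

/-- The random series `X(λ; a) = Σ_{m≥1} a_m λ^{m-1}` (zero-indexed). -/
def X (lam : ℝ) (a : ℕ → Bool) : ℝ := ∑' n : ℕ, sgn (a n) * lam ^ n

/-- The Bernoulli convolution `μ_λ`, the law of `X(λ; ·)`. -/
def bc (ν : Measure (ℕ → Bool)) (lam : ℝ) : Measure ℝ := ν.map (X lam)

/-- Fourier transform `μ̂(ξ) = ∫ e^{iξx} dμ(x)` of a measure on `ℝ`. -/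
def FT (μ : Measure ℝ) (ξ : ℝ) : ℂ := ∫ x, Complex.exp (ξ * x * Complex.I) ∂μ

namespace BCProofAux

lemma sgn_abs (b : Bool) : |sgn b| = 1 := by cases b <;> simp [sgn]

lemma summable_term {lam : ℝ} (h0 : 0 < lam) (h1 : lam < 1) (a : ℕ → Bool) :
    Summable (fun k => sgn (a k) * lam ^ k) := by
  apply Summable.of_norm_bounded (summable_geometric_of_lt_one h0.le h1)
  intro k
  rw [Real.norm_eq_abs, abs_mul, sgn_abs, one_mul, abs_pow, abs_of_pos h0]

lemma measurable_Sn (lam : ℝ) (N : ℕ) :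
    Measurable (fun a : ℕ → Bool => ∑ k ∈ Finset.range N, sgn (a k) * lam ^ k) :=
  Finset.measurable_sum _ fun k _ =>
    (Measurable.comp (measurable_from_top : Measurable sgn) (measurable_pi_apply k)).mul_const _

lemma measurable_X {lam : ℝ} (h0 : 0 < lam) (h1 : lam < 1) : Measurable (X lam) := by
  apply measurable_of_tendsto_metrizable (f := fun N a => ∑ k ∈ Finset.range N, sgn (a k) * lam ^ k)
    (fun N => measurable_Sn lam N)
  rw [tendsto_pi_nhds]
  intro a
  exact (summable_term h0 h1 a).hasSum.tendsto_sum_nat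

/-- `E r = e^{ir}`. -/
def E (r : ℝ) : ℂ := Complex.exp (r * Complex.I)

lemma E_sum {ι : Type*} (s : Finset ι) (r : ι → ℝ) : E (∑ k ∈ s, r k) = ∏ k ∈ s, E (r k) := by
  simp only [E]
  rw [← Complex.exp_sum]
  congr 1
  push_cast
  rw [Finset.sum_mul]

lemma abs_E (r : ℝ) : ‖E r‖ = 1 := Complex.norm_exp_ofReal_mul_I r

lemma half_E_add (u : ℝ) : (1/2 : ℂ) * (E u + E (-u)) = ((Real.cos u : ℝ) : ℂ) := by
  rw [Complex.ofReal_cos, Complex.cos, E, E]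
  push_cast
  ring

/-- The basic computation: integral of `e^{iξ S_N}` over the Bernoulli measure. -/
lemma integral_exp_Sn (ν : Measure (ℕ → Bool)) (hν : IsBernoulliMeasure ν) (lam ξ : ℝ) (N : ℕ) :
    ∫ a, E (ξ * ∑ k ∈ Finset.range N, sgn (a k) * lam ^ k) ∂ν
      = ∏ k ∈ Finset.range N, ((Real.cos (lam ^ k * ξ) : ℝ) : ℂ) := by
  classical
  set ebf : (Fin N → Bool) → (ℕ → Bool) := fun b i => if h : i < N then b ⟨i, h⟩ else false
    with hebf
  set C : (Fin N → Bool) → Set (ℕ → Bool) := fun b => {a | ∀ i ∈ Finset.range N, a i = ebf b i}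
    with hC
  set G : (Fin N → Bool) → ℂ := fun b => ∏ k : Fin N, E (ξ * (sgn (b k) * lam ^ (k : ℕ)))
    with hG
  have hCmeas : ∀ b, MeasurableSet (C b) := by
    intro b
    have : C b = ⋂ i ∈ Finset.range N, (fun a : ℕ → Bool => a i) ⁻¹' {ebf b i} := by
      ext a; simp [hC]
    rw [this]
    exact MeasurableSet.biInter (Finset.range N).countable_toSet
      (fun i _ => (measurable_pi_apply i) (measurableSet_singleton _))
  have hCval : ∀ b, ν (C b) = (1/2 : ENNReal) ^ N := by
    intro b; rw [hC]; simp only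
    rw [hν.2 (Finset.range N) (ebf b), Finset.card_range]
  have hpoint : ∀ a : ℕ → Bool,
      E (ξ * ∑ k ∈ Finset.range N, sgn (a k) * lam ^ k)
        = ∑ b : Fin N → Bool, (C b).indicator (fun _ => G b) a := by
    intro a
    rw [Finset.sum_eq_single_of_mem (fun i : Fin N => a i) (Finset.mem_univ _)]
    · have ha : a ∈ C (fun i : Fin N => a i) := by
        intro i hi
        simp only [hebf]
        rw [dif_pos (Finset.mem_range.1 hi)]
      rw [Set.indicator_of_mem ha, hG]
      simp only
      rw [Fin.prod_univ_eq_prod_range (fun k => E (ξ * (sgn (a k) * lam ^ k))) N,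
        Finset.mul_sum, E_sum]
    · intro b _ hb
      apply Set.indicator_of_notMem
      intro hmem
      apply hb
      funext i
      have h := hmem i.1 (Finset.mem_range.2 i.2)
      simp only [hebf] at h
      rw [dif_pos i.2] at h
      simp [← h]
  calc ∫ a, E (ξ * ∑ k ∈ Finset.range N, sgn (a k) * lam ^ k) ∂ν
      = ∫ a, ∑ b : Fin N → Bool, (C b).indicator (fun _ => G b) a ∂ν := by
        simp only [hpoint]
    _ = ∑ b : Fin N → Bool, ∫ a, (C b).indicator (fun _ => G b) a ∂ν := by
        apply integral_finset_sum
        intro b _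
        haveI := hν.1
        exact (integrable_const (G b)).indicator (hCmeas b)
    _ = ∑ b : Fin N → Bool, ((1/2 : ℝ) ^ N) • G b := by
        apply Finset.sum_congr rfl
        intro b _
        rw [integral_indicator_const (G b) (hCmeas b), measureReal_def, hCval b]
        congr 1
        simp [ENNReal.toReal_pow]
    _ = ((1/2 : ℝ) ^ N) • ∑ b : Fin N → Bool, G b := (Finset.smul_sum).symm
    _ = ∏ k ∈ Finset.range N, ((Real.cos (lam ^ k * ξ) : ℝ) : ℂ) := by
        rw [hG]
        simp only
        have : ∑ b : Fin N → Bool, ∏ k : Fin N, E (ξ * (sgn (b k) * lam ^ (k : ℕ)))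
            = ∏ k : Fin N, ∑ t : Bool, E (ξ * (sgn t * lam ^ (k : ℕ))) := by
          have h := Finset.prod_univ_sum (fun _ : Fin N => (Finset.univ : Finset Bool))
            (fun k t => E (ξ * (sgn t * lam ^ (k : ℕ))))
          rw [Fintype.piFinset_univ] at h
          exact h.symm
        rw [this, Complex.real_smul,
          show (((1/2 : ℝ) ^ N : ℝ) : ℂ) = (1/2 : ℂ) ^ N by push_cast; ring]
        rw [← Fin.prod_univ_eq_prod_range (fun k => ((Real.cos (lam ^ k * ξ) : ℝ) : ℂ)) N]
        have hdistrib : ∏ k : Fin N, ((1/2 : ℂ) * ∑ t : Bool, E (ξ * (sgn t * lam ^ (k : ℕ))))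
            = (1/2 : ℂ) ^ N * ∏ k : Fin N, ∑ t : Bool, E (ξ * (sgn t * lam ^ (k : ℕ))) := by
          rw [Finset.prod_mul_distrib, Finset.prod_const, Finset.card_univ, Fintype.card_fin]
        rw [← hdistrib]
        · apply Finset.prod_congr rfl
          intro k _
          rw [Fintype.sum_bool]
          have h1 : sgn true = 1 := rfl
          have h2 : sgn false = -1 := rfl
          rw [h1, h2, one_mul, neg_one_mul]
          have : ξ * -(lam ^ (k : ℕ)) = -(lam ^ (k : ℕ) * ξ) := by ring
          rw [this]
          have : ξ * lam ^ (k : ℕ) = lam ^ (k : ℕ) * ξ := by ring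
          rw [this]
          exact half_E_add (lam ^ (k : ℕ) * ξ)

/-- Partial products of cosines converge to the Fourier transform of the
Bernoulli convolution. -/
lemma tendsto_prod_cos (ν : Measure (ℕ → Bool)) (hν : IsBernoulliMeasure ν)
    {lam : ℝ} (h0 : 0 < lam) (h1 : lam < 1) (ξ : ℝ) :
    Tendsto (fun N => ∏ k ∈ Finset.range N, ((Real.cos (lam ^ k * ξ) : ℝ) : ℂ)) atTop
      (nhds (FT (bc ν lam) ξ)) := by
  haveI := hν.1
  have hFT : FT (bc ν lam) ξ = ∫ a, E (ξ * X lam a) ∂ν := by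
    rw [FT, bc, integral_map (measurable_X h0 h1).aemeasurable]
    · apply integral_congr_ae
      filter_upwards with a
      rw [E]
      push_cast
      ring_nf
    · exact (Continuous.aestronglyMeasurable (by continuity))
  have key : Tendsto (fun N => ∫ a, E (ξ * ∑ k ∈ Finset.range N, sgn (a k) * lam ^ k) ∂ν) atTop
      (nhds (∫ a, E (ξ * X lam a) ∂ν)) := by
    apply tendsto_integral_of_dominated_convergence (bound := fun _ => (1 : ℝ))
    · intro N
      apply Measurable.aestronglyMeasurable
      apply Complex.measurable_exp.comp
      exact (Complex.measurable_ofReal.comp ((measurable_Sn lam N).const_mul ξ)).mul_const _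
    · exact integrable_const 1
    · intro N
      filter_upwards with a
      rw [abs_E]
    · filter_upwards with a
      have : Tendsto (fun N => ξ * ∑ k ∈ Finset.range N, sgn (a k) * lam ^ k) atTop
          (nhds (ξ * X lam a)) := by
        exact ((summable_term h0 h1 a).hasSum.tendsto_sum_nat).const_mul ξ
      exact ((Complex.continuous_exp.comp
        ((Complex.continuous_ofReal).mul continuous_const)).tendsto _).comp this
  rw [hFT]
  have heq : (fun N => ∏ k ∈ Finset.range N, ((Real.cos (lam ^ k * ξ) : ℝ) : ℂ))
      = fun N => ∫ a, E (ξ * ∑ k ∈ Finset.range N, sgn (a k) * lam ^ k) ∂ν := by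
    funext N
    exact (integral_exp_Sn ν hν lam ξ N).symm
  rw [heq]
  exact key

/-- For `0 ≤ f ≤ 1`, the infinite product is at most any finite subproduct. -/
lemma tprod_le_prod {ι : Type*} (f : ι → ℝ) (h0 : ∀ i, 0 ≤ f i) (h1 : ∀ i, f i ≤ 1)
    (s : Finset ι) : (∏' i, f i) ≤ ∏ i ∈ s, f i := by
  classical
  set P : Finset ι → ℝ := fun t => ∏ i ∈ t, f i with hP
  have hanti : Antitone P := by
    intro u v huv
    have := Finset.prod_sdiff huv (f := f)
    rw [hP]; simp only
    rw [← this]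
    have hle1 : (∏ i ∈ v \ u, f i) ≤ 1 := Finset.prod_le_one (fun i _ => h0 i) (fun i _ => h1 i)
    have hnn : (0 : ℝ) ≤ ∏ i ∈ u, f i := Finset.prod_nonneg (fun i _ => h0 i)
    nlinarith [Finset.prod_nonneg (fun i (_ : i ∈ v \ u) => h0 i)]
  have hbdd : BddBelow (Set.range P) := by
    refine ⟨0, ?_⟩
    rintro x ⟨t, rfl⟩
    exact Finset.prod_nonneg (fun i _ => h0 i)
  have htend : Tendsto P atTop (nhds (⨅ t, P t)) := tendsto_atTop_ciInf hanti hbdd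
  have hhp : HasProd f (⨅ t, P t) := htend
  rw [hhp.tprod_eq]
  exact ciInf_le hbdd s

end BCProofAux

open BCProofAux in
/-- for any `λ ∈ (0,1)`, `ξ ∈ ℝ` and `n ∈ ℕ`,
`∏_{k ≥ 0, k ≠ n} |cos(λᵏ ξ)| ≤ |μ̂_{λ³}(ξ)|² + |μ̂_{λ³}(λξ)|² + |μ̂_{λ³}(λ²ξ)|²`. -/
theorem prod_abs_cos_le_sum_sq_fourier
    (ν : Measure (ℕ → Bool)) (hν : IsBernoulliMeasure ν)
    (lam : ℝ) (hlam : lam ∈ Ioo (0 : ℝ) 1) (ξ : ℝ) (n : ℕ) :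
    (∏' k : {k : ℕ // k ≠ n}, |Real.cos (lam ^ (k : ℕ) * ξ)|) ≤
      ‖FT (bc ν (lam ^ 3)) ξ‖ ^ 2 +
        ‖FT (bc ν (lam ^ 3)) (lam * ξ)‖ ^ 2 +
        ‖FT (bc ν (lam ^ 3)) (lam ^ 2 * ξ)‖ ^ 2 := by
  classical
  obtain ⟨hl0, hl1⟩ := hlam
  have hl30 : (0 : ℝ) < lam ^ 3 := by positivity
  have hl31 : lam ^ 3 < 1 := pow_lt_one₀ hl0.le hl1 (by norm_num)
  set g : ℕ → ℝ := fun k => |Real.cos (lam ^ k * ξ)| with hg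
  have hg0 : ∀ k, 0 ≤ g k := fun k => abs_nonneg _
  have hg1 : ∀ k, g k ≤ 1 := fun k => Real.abs_cos_le_one _ |>.trans_eq rfl
  set A : ℕ → ℝ := fun j => ‖FT (bc ν (lam ^ 3)) (lam ^ j * ξ)‖ with hA
  -- partial products of `g` along each residue class tend to `A j`
  have htendA : ∀ j, Tendsto (fun N => ∏ m ∈ Finset.range N, g (3 * m + j)) atTop (nhds (A j)) := by
    intro j
    have h := tendsto_prod_cos ν hν hl30 hl31 (lam ^ j * ξ)
    have h2 := (continuous_norm.tendsto _).comp h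
    have heq : (fun N => ‖∏ k ∈ Finset.range N,
        ((Real.cos ((lam ^ 3) ^ k * (lam ^ j * ξ)) : ℝ) : ℂ)‖)
        = fun N => ∏ m ∈ Finset.range N, g (3 * m + j) := by
      funext N
      rw [norm_prod]
      apply Finset.prod_congr rfl
      intro m _
      rw [Complex.norm_real, Real.norm_eq_abs, hg]
      congr 2
      rw [← pow_mul]
      rw [pow_add]
      ring
    rw [← heq]
    exact h2
  have hAnn : ∀ j, 0 ≤ A j := fun j => norm_nonneg _
  -- key inequality for two residue classes avoiding n
  have key : ∀ j1 j2 : ℕ, j1 < 3 → j2 < 3 → j1 ≠ j2 → j1 ≠ n % 3 → j2 ≠ n % 3 →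
      (∏' k : {k : ℕ // k ≠ n}, g (k : ℕ)) ≤ A j1 * A j2 := by
    intro j1 j2 hj1 hj2 hj12 hjn1 hjn2
    apply ge_of_tendsto ((htendA j1).mul (htendA j2))
    filter_upwards with N
    set t : Finset ℕ := ((Finset.range N).image (fun m => 3 * m + j1)) ∪
        ((Finset.range N).image (fun m => 3 * m + j2)) with ht
    have hall : ∀ k ∈ t, k ≠ n := by
      intro k hk
      rw [ht] at hk
      simp only [Finset.mem_union, Finset.mem_image, Finset.mem_range] at hk
      rcases hk with ⟨m, _, rfl⟩ | ⟨m, _, rfl⟩ <;> omega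
    have hsub : (∏' k : {k : ℕ // k ≠ n}, g (k : ℕ)) ≤ ∏ k ∈ t, g k := by
      have := tprod_le_prod (fun k : {k : ℕ // k ≠ n} => g (k : ℕ))
        (fun k => hg0 _) (fun k => hg1 _)
        (t.attach.map ⟨fun x => (⟨x.1, hall x.1 x.2⟩ : {k : ℕ // k ≠ n}),
          by intro x y hxy; exact Subtype.ext (by simpa using hxy)⟩)
      rw [Finset.prod_map] at this
      change _ ≤ ∏ x ∈ t.attach, g x.1 at this
      rw [Finset.prod_attach t (fun k => g k)] at this
      exact this
    refine hsub.trans ?_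
    have hdisj : Disjoint ((Finset.range N).image (fun m => 3 * m + j1))
        ((Finset.range N).image (fun m => 3 * m + j2)) := by
      rw [Finset.disjoint_left]
      intro k hk1 hk2
      simp only [Finset.mem_image, Finset.mem_range] at hk1 hk2
      obtain ⟨m1, _, h1⟩ := hk1
      obtain ⟨m2, _, h2⟩ := hk2
      omega
    rw [ht, Finset.prod_union hdisj,
      Finset.prod_image (by intro a _ b _ h; simp only at h; omega),
      Finset.prod_image (by intro a _ b _ h; simp only at h; omega)]
  -- final case analysis on n % 3
  have hRHS : ‖FT (bc ν (lam ^ 3)) ξ‖ ^ 2 +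
        ‖FT (bc ν (lam ^ 3)) (lam * ξ)‖ ^ 2 +
        ‖FT (bc ν (lam ^ 3)) (lam ^ 2 * ξ)‖ ^ 2
      = A 0 ^ 2 + A 1 ^ 2 + A 2 ^ 2 := by
    rw [hA]
    simp only [pow_zero, one_mul, pow_one]
  rw [hRHS]
  have hmod : n % 3 = 0 ∨ n % 3 = 1 ∨ n % 3 = 2 := by omega
  rcases hmod with h | h | h
  · have := key 1 2 (by omega) (by omega) (by omega) (by omega) (by omega)
    nlinarith [sq_nonneg (A 1 - A 2), hAnn 0, hAnn 1, hAnn 2, sq_nonneg (A 0)]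
  · have := key 0 2 (by omega) (by omega) (by omega) (by omega) (by omega)
    nlinarith [sq_nonneg (A 0 - A 2), hAnn 0, hAnn 1, hAnn 2, sq_nonneg (A 1)]
  · have := key 0 1 (by omega) (by omega) (by omega) (by omega) (by omega)
    nlinarith [sq_nonneg (A 0 - A 1), hAnn 0, hAnn 1, hAnn 2, sq_nonneg (A 2)]

end
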